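/- For every positive integer n ≥ 3, there exists a 3-suitable family of permutations of [n] of cardinality at most 2⌈log₂ log₂ n⌉ + 2. -/

import Mathlib

/-- A family of strict orders is *3-suitable* if for every three distinct elements
`a b c` and distinguished element `a`, some order places `a` after both `b` and `c`. -/
def Fam3Suitable {X ι : Type*} (S : ι → X → X → Prop) : Prop :=
  ∀ a b c : X, a ≠ b → a ≠ c → b ≠ c → ∃ i, S i b a ∧ S i c a

/-- A family of strict orders is *weakly 3-suitable* if for every three distinct elements
`a b c` and distinguished element `a`, some order places `a` after both `b` and `c`
or before both `b` and `c`. -/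
def FamWeakly3Suitable {X ι : Type*} (S : ι → X → X → Prop) : Prop :=
  ∀ a b c : X, a ≠ b → a ≠ c → b ≠ c →
    ∃ i, (S i b a ∧ S i c a) ∨ (S i a b ∧ S i a c)

/-- Minimum cardinality of a weakly 3-suitable family of permutations of `[n]`. -/
noncomputable def permOmega (n : ℕ) : ℕ :=
  sInf {k | ∃ S : Fin k → Fin n → Fin n → Prop,
    (∀ i, IsStrictTotalOrder (Fin n) (S i)) ∧ FamWeakly3Suitable S}

/-- Minimum cardinality of a 3-suitable family of permutations of `[n]`. -/
noncomputable def permAlpha (n : ℕ) : ℕ :=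
  sInf {k | ∃ S : Fin k → Fin n → Fin n → Prop,
    (∀ i, IsStrictTotalOrder (Fin n) (S i)) ∧ Fam3Suitable S}


namespace Suitable

/-- Mask with bits given by `f` on positions `< L`. -/
def maskF (f : ℕ → Bool) : ℕ → ℕ
  | 0 => 0
  | L + 1 => maskF f L ||| (if f L then 2 ^ L else 0)

theorem testBit_maskF (f : ℕ → Bool) (L p : ℕ) :
    (maskF f L).testBit p = (decide (p < L) && f p) := by
  induction L with
  | zero => simp [maskF]
  | succ L ih =>
    rw [maskF, Nat.testBit_lor, ih]
    by_cases hfl : f L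
    · simp only [hfl, if_true, Nat.testBit_two_pow]
      rcases Nat.lt_trichotomy p L with h | h | h
      · simp [h, Nat.lt_succ_of_lt h, Nat.ne_of_gt h]
      · subst h; simp [hfl, Nat.lt_irrefl]
      · simp [Nat.not_lt.2 (Nat.le_of_lt h), Nat.not_lt.2 h, Nat.ne_of_lt h]
    · simp only [hfl, if_false, Nat.zero_testBit, Bool.or_false]
      rcases Nat.lt_trichotomy p L with h | h | h
      · simp [h, Nat.lt_succ_of_lt h]
      · subst h; simp [hfl, Nat.lt_irrefl]
      · simp [Nat.not_lt.2 (Nat.le_of_lt h), Nat.not_lt.2 h]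

theorem testBit_log2 {d : ℕ} (hd : d ≠ 0) : d.testBit d.log2 = true := by
  have h1 : 2 ^ d.log2 ≤ d := Nat.log2_self_le hd
  have h2 : d < 2 ^ (d.log2 + 1) := Nat.lt_log2_self
  rw [Nat.testBit_eq_decide_div_mod_eq]
  have : d / 2 ^ d.log2 = 1 := by
    have := Nat.div_le_div_right (c := 2 ^ d.log2) (Nat.le_of_lt_succ (Nat.lt_succ_of_lt h2))
    have hlo : 1 ≤ d / 2 ^ d.log2 := (Nat.one_le_div_iff (Nat.pow_pos (by norm_num))).2 h1
    have hhi : d / 2 ^ d.log2 < 2 := by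
      rw [Nat.div_lt_iff_lt_mul (Nat.pow_pos (by norm_num))]
      calc d < 2 ^ (d.log2 + 1) := h2
        _ = 2 ^ d.log2 * 2 := by ring
        _ = 2 * 2 ^ d.log2 := by ring
    omega
  simp [this]

/-- Key order lemma: for `x ≠ y`, `x < y` iff `y`'s bit at the top differing
position is `true`. -/
theorem lt_iff_testBit_log2_xor {x y : ℕ} (hxy : x ≠ y) :
    x < y ↔ y.testBit ((x ^^^ y).log2) = true := by
  set d := x ^^^ y with hd
  have hdne : d ≠ 0 := fun h => hxy (xor_eq_zero_iff.1 h)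
  set p := d.log2 with hp
  have hbit : d.testBit p = true := testBit_log2 hdne
  have hdiff : x.testBit p ≠ y.testBit p := by
    intro h
    rw [hd] at hbit; rw [Nat.testBit_xor, h] at hbit; simp at hbit
  have hhigh : ∀ j, p < j → x.testBit j = y.testBit j := by
    intro j hj
    have : d < 2 ^ j := (Nat.log2_lt hdne).1 hj
    have hdj : d.testBit j = false := Nat.testBit_lt_two_pow this
    rw [hd, Nat.testBit_xor] at hdj
    cases hx : x.testBit j <;> cases hy : y.testBit j <;> simp [hx, hy] at hdj ⊢
  constructor
  · intro hlt
    by_contra h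
    have hy : y.testBit p = false := by simpa using h
    have hx : x.testBit p = true := by
      cases hxb : x.testBit p
      · exact absurd (hxb.trans hy.symm) hdiff
      · rfl
    have : y < x := Nat.lt_of_testBit p hy hx (fun j hj => (hhigh j hj).symm)
    omega
  · intro hy
    have hx : x.testBit p = false := by
      cases hxb : x.testBit p
      · rfl
      · exact absurd (hxb.trans hy.symm) hdiff
    exact Nat.lt_of_testBit p hx hy hhigh

/-- The bit-pattern selector for index `i`. -/
def gsel (i : ℕ) : ℕ → Bool :=
  if i = 0 then fun _ => false
  else if i = 1 then fun _ => true
  else fun r => r.testBit ((i - 2) / 2) == decide ((i - 2) % 2 = 1)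

theorem exists_sel (t L : ℕ) (hLt : L ≤ 2 ^ t) (a p q : ℕ) (hp : p < L) (hq : q < L) :
    ∃ i : ℕ, i < 2 * t + 2 ∧ gsel i p ≠ a.testBit p ∧ gsel i q ≠ a.testBit q := by
  cases hu : a.testBit p <;> cases hv : a.testBit q
  · -- both false : all-ones mask
    exact ⟨1, by omega, by simp [gsel], by simp [gsel]⟩
  · -- u false v true : p ≠ q
    have hpq : p ≠ q := fun h => by rw [h, hv] at hu; simp at hu
    obtain ⟨j, hj⟩ : ∃ j, p.testBit j ≠ q.testBit j := by
      by_contra h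
      push_neg at h
      exact hpq (Nat.eq_of_testBit_eq h)
    have hjt : j < t := by
      by_contra hjt
      push_neg at hjt
      have h2 : (2:ℕ) ^ t ≤ 2 ^ j := Nat.pow_le_pow_right (by norm_num) hjt
      have hp' : p.testBit j = false := Nat.testBit_lt_two_pow (lt_of_lt_of_le hp (le_trans hLt h2))
      have hq' : q.testBit j = false := Nat.testBit_lt_two_pow (lt_of_lt_of_le hq (le_trans hLt h2))
      exact hj (hp'.trans hq'.symm)
    -- want gsel i p ≠ false (i.e. = true), gsel i q ≠ true (i.e. = false)
    -- gsel i r = (r.testBit j == β); want (p.testBit j == β) = true, (q.testBit j == β) = false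
    -- so β := p.testBit j
    set β := p.testBit j with hβ
    refine ⟨2 + 2 * j + (bif β then 1 else 0), by cases β <;> simp <;> omega, ?_, ?_⟩ <;>
      · have h0 : (2 + 2 * j + (bif β then 1 else 0)) ≠ 0 := by cases β <;> simp <;> omega
        have h1 : (2 + 2 * j + (bif β then 1 else 0)) ≠ 1 := by cases β <;> simp <;> omega
        have h2 : (2 + 2 * j + (bif β then 1 else 0) - 2) / 2 = j := by cases β <;> simp <;> omega
        have h3 : decide ((2 + 2 * j + (bif β then 1 else 0) - 2) % 2 = 1) = β := by
          cases β <;> simp <;> omega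
        simp only [gsel, if_neg h0, if_neg h1, h2, h3, hu, hv]
        revert hj; cases hpj : p.testBit j <;> cases hqj : q.testBit j <;> simp [hβ, hpj]
  · -- u true v false : symmetric, β := !p.testBit j
    have hpq : p ≠ q := fun h => by rw [h, hv] at hu; simp at hu
    obtain ⟨j, hj⟩ : ∃ j, p.testBit j ≠ q.testBit j := by
      by_contra h
      push_neg at h
      exact hpq (Nat.eq_of_testBit_eq h)
    have hjt : j < t := by
      by_contra hjt
      push_neg at hjt
      have h2 : (2:ℕ) ^ t ≤ 2 ^ j := Nat.pow_le_pow_right (by norm_num) hjt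
      have hp' : p.testBit j = false := Nat.testBit_lt_two_pow (lt_of_lt_of_le hp (le_trans hLt h2))
      have hq' : q.testBit j = false := Nat.testBit_lt_two_pow (lt_of_lt_of_le hq (le_trans hLt h2))
      exact hj (hp'.trans hq'.symm)
    set β := !p.testBit j with hβ
    refine ⟨2 + 2 * j + (bif β then 1 else 0), by cases β <;> simp <;> omega, ?_, ?_⟩ <;>
      · have h0 : (2 + 2 * j + (bif β then 1 else 0)) ≠ 0 := by cases β <;> simp <;> omega
        have h1 : (2 + 2 * j + (bif β then 1 else 0)) ≠ 1 := by cases β <;> simp <;> omega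
        have h2 : (2 + 2 * j + (bif β then 1 else 0) - 2) / 2 = j := by cases β <;> simp <;> omega
        have h3 : decide ((2 + 2 * j + (bif β then 1 else 0) - 2) % 2 = 1) = β := by
          cases β <;> simp <;> omega
        simp only [gsel, if_neg h0, if_neg h1, h2, h3, hu, hv]
        revert hj; cases hpj : p.testBit j <;> cases hqj : q.testBit j <;> simp [hβ, hpj]
  · -- both true : zero mask
    exact ⟨0, by omega, by simp [gsel], by simp [gsel]⟩

end Suitable


namespace Suitable
theorem xor_xor_cancel (x y M : ℕ) : (x ^^^ M) ^^^ (y ^^^ M) = x ^^^ y := by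
  apply Nat.eq_of_testBit_eq
  intro i
  simp only [Nat.testBit_xor]
  cases x.testBit i <;> cases y.testBit i <;> cases M.testBit i <;> rfl
end Suitable

theorem suitable_family_exists' (n : ℕ) (hn : 3 ≤ n) :
    ∃ k, k ≤ 2 * Nat.clog 2 (Nat.clog 2 n) + 2 ∧
      ∃ S : Fin k → Fin n → Fin n → Prop,
        (∀ i, IsStrictTotalOrder (Fin n) (S i)) ∧ Fam3Suitable S := by
  set L := Nat.clog 2 n with hL
  set t := Nat.clog 2 L with ht
  have hn2L : n ≤ 2 ^ L := Nat.le_pow_clog (by norm_num) n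
  have hL2t : L ≤ 2 ^ t := Nat.le_pow_clog (by norm_num) L
  refine ⟨2 * t + 2, le_refl _,
    fun i x y => (x.val ^^^ Suitable.maskF (Suitable.gsel i.val) L)
      < (y.val ^^^ Suitable.maskF (Suitable.gsel i.val) L), ?_, ?_⟩
  · intro i
    set M := Suitable.maskF (Suitable.gsel i.val) L with hM
    refine { trichotomous := ?_, irrefl := ?_, trans := ?_ }
    · intro x y hxy hyx
      rcases Nat.lt_trichotomy (x.val ^^^ M) (y.val ^^^ M) with h | h | h
      · exact absurd h hxy
      · refine Fin.ext ?_
        have := congrArg (· ^^^ M) h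
        simpa [xor_cancel_right] using this
      · exact absurd h hyx
    · intro x; exact Nat.lt_irrefl _
    · intro x y z hxy hyz; exact Nat.lt_trans hxy hyz
  · intro a b c hab hac hbc
    set M : ℕ → ℕ := fun i => Suitable.maskF (Suitable.gsel i) L with hMdef
    have hval : ∀ x y : Fin n, x ≠ y → (x.val : ℕ) ≠ y.val := by
      intro x y hxy h; exact hxy (Fin.ext h)
    have hba : (b.val : ℕ) ≠ a.val := hval b a (Ne.symm hab)
    have hca : (c.val : ℕ) ≠ a.val := hval c a (Ne.symm hac)
    have hxor : ∀ x y : Fin n, (x.val ^^^ y.val : ℕ) < 2 ^ L :=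
      fun x y => Nat.xor_lt_two_pow (lt_of_lt_of_le x.isLt hn2L) (lt_of_lt_of_le y.isLt hn2L)
    set p := (b.val ^^^ a.val : ℕ).log2 with hp
    set q := (c.val ^^^ a.val : ℕ).log2 with hq
    have hbne : (b.val ^^^ a.val : ℕ) ≠ 0 := fun h => hba (xor_eq_zero_iff.1 h)
    have hcne : (c.val ^^^ a.val : ℕ) ≠ 0 := fun h => hca (xor_eq_zero_iff.1 h)
    have hpL : p < L := (Nat.log2_lt hbne).2 (hxor b a)
    have hqL : q < L := (Nat.log2_lt hcne).2 (hxor c a)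
    obtain ⟨i, hi, h1, h2⟩ := Suitable.exists_sel t L hL2t a.val p q hpL hqL
    refine ⟨⟨i, hi⟩, ?_, ?_⟩
    · -- (b ^^^ M i) < (a ^^^ M i)
      have hne : (b.val ^^^ M i : ℕ) ≠ (a.val ^^^ M i) := by
        intro h
        apply hba
        have := congrArg (· ^^^ M i) h
        simpa [xor_cancel_right] using this
      show (b.val ^^^ M i : ℕ) < (a.val ^^^ M i)
      rw [Suitable.lt_iff_testBit_log2_xor hne, Suitable.xor_xor_cancel]
      rw [Nat.testBit_xor, hMdef, Suitable.testBit_maskF, decide_eq_true hpL, Bool.true_and]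
      revert h1; cases ha : (a.val : ℕ).testBit p <;>
        cases hg : Suitable.gsel i p <;> simp [ha, hg]
    · have hne : (c.val ^^^ M i : ℕ) ≠ (a.val ^^^ M i) := by
        intro h
        apply hca
        have := congrArg (· ^^^ M i) h
        simpa [xor_cancel_right] using this
      show (c.val ^^^ M i : ℕ) < (a.val ^^^ M i)
      rw [Suitable.lt_iff_testBit_log2_xor hne, Suitable.xor_xor_cancel]
      rw [Nat.testBit_xor, hMdef, Suitable.testBit_maskF, decide_eq_true hqL, Bool.true_and]
      revert h2; cases ha : (a.val : ℕ).testBit q <;>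
        cases hg : Suitable.gsel i q <;> simp [ha, hg]

/-- For every `n ≥ 3` there exists a 3-suitable family of permutations
(strict total orders) of `[n]` of cardinality at most `2⌈log₂ log₂ n⌉ + 2`. -/
theorem suitable_family_exists (n : ℕ) (hn : 3 ≤ n) :
    ∃ k, k ≤ 2 * Nat.clog 2 (Nat.clog 2 n) + 2 ∧
      ∃ S : Fin k → Fin n → Fin n → Prop,
        (∀ i, IsStrictTotalOrder (Fin n) (S i)) ∧ Fam3Suitable S := by
  exact suitable_family_exists' n hn
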